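/- arXiv:1509.07321 — 4 statements merged into one kernel-verified Lean document; each statement's English description precedes it below -/
import Mathlib

section
/- Let ξ be a positive random variable with finite mean μ = E[ξ] > 0, let ξ₀ be a random variable with the size-biased distribution P{ξ₀ ≤ x} = (1/μ)∫_{[0,x]} y P{ξ ∈ dy}, and let U be uniform on [0,1] independent of ξ₀. Then for all y, z ≥ 0, P{(1−U)ξ₀ ≤ y, Uξ₀ < z} = (1/μ)·E[(z ∧ ξ − (ξ − y)₊)₊]. -/
open MeasureTheory ProbabilityTheory
open scoped ENNReal

lemma sect_measure {x y z : ℝ} (hx : 0 < x) (hy : 0 ≤ y) (hz : 0 ≤ z) :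
    (volume.restrict (Set.Icc (0:ℝ) 1)) {u : ℝ | (1 - u) * x ≤ y ∧ u * x < z}
      = ENNReal.ofReal (max (min z x - max (x - y) 0) 0 / x) := by
  set a : ℝ := max 0 (1 - y / x) with ha
  set b : ℝ := min 1 (z / x) with hb
  set T : Set ℝ := {u : ℝ | (1 - u) * x ≤ y ∧ u * x < z} with hT
  have h1 : Set.Ioo a b ⊆ T ∩ Set.Icc 0 1 := by
    rintro u ⟨hua, hub⟩
    have hu0 : (0:ℝ) ≤ u := le_of_lt (lt_of_le_of_lt (le_max_left _ _) hua)
    have hu1 : u ≤ 1 := le_trans hub.le (min_le_left _ _)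
    have h1u : 1 - y / x < u := lt_of_le_of_lt (le_max_right _ _) hua
    have huz : u < z / x := lt_of_lt_of_le hub (min_le_right _ _)
    refine ⟨⟨?_, ?_⟩, hu0, hu1⟩
    · exact le_of_lt ((lt_div_iff₀ hx).mp (by linarith))
    · exact (lt_div_iff₀ hx).mp huz
  have h2 : T ∩ Set.Icc 0 1 ⊆ Set.Icc a b := by
    rintro u ⟨⟨hc1, hc2⟩, hu0, hu1⟩
    constructor
    · refine max_le hu0 ?_
      have : 1 - u ≤ y / x := (le_div_iff₀ hx).mpr hc1
      linarith
    · exact le_min hu1 (le_of_lt ((lt_div_iff₀ hx).mpr hc2))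
  have hvol : (volume.restrict (Set.Icc (0:ℝ) 1)) T = ENNReal.ofReal (b - a) := by
    rw [Measure.restrict_apply' measurableSet_Icc]
    refine le_antisymm ?_ ?_
    · calc volume (T ∩ Set.Icc 0 1) ≤ volume (Set.Icc a b) := measure_mono h2
        _ = ENNReal.ofReal (b - a) := Real.volume_Icc
    · calc ENNReal.ofReal (b - a) = volume (Set.Ioo a b) := Real.volume_Ioo.symm
        _ ≤ volume (T ∩ Set.Icc 0 1) := measure_mono h1
  rw [hvol]
  have hxne : x ≠ 0 := hx.ne'
  have hbx : b = min z x / x := by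
    rw [hb, min_comm z x, ← min_div_div_right hx.le, div_self hxne]
  have hax : a = max (x - y) 0 / x := by
    rw [ha, max_comm (x - y) 0, ← max_div_div_right hx.le, zero_div, sub_div, div_self hxne]
  have hdiff : b - a = (min z x - max (x - y) 0) / x := by
    rw [hbx, hax, sub_div]
  rw [hdiff]
  rcases le_or_gt 0 (min z x - max (x - y) 0) with h | h
  · rw [max_eq_left h]
  · rw [max_eq_right h.le, zero_div, ENNReal.ofReal_eq_zero.mpr
      (div_nonpos_of_nonpos_of_nonneg h.le hx.le), ENNReal.ofReal_zero]

theorem stmt0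
    {Ω : Type*} [MeasurableSpace Ω] (P : Measure Ω) [IsProbabilityMeasure P]
    (ξ ξ₀ U : Ω → ℝ) (μ : ℝ)
    (hξpos : ∀ᵐ ω ∂P, 0 < ξ ω)
    (hξint : Integrable ξ P)
    (hμ : μ = ∫ ω, ξ ω ∂P) (hμpos : 0 < μ)
    (hmeasξ₀ : Measurable ξ₀) (hmeasU : Measurable U)
    (hsize : ∀ x : ℝ, 0 ≤ x →
      (P {ω | ξ₀ ω ≤ x}).toReal = μ⁻¹ * ∫ ω in {ω | ξ ω ≤ x}, ξ ω ∂P)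
    (hU : Measure.map U P = volume.restrict (Set.Icc (0:ℝ) 1))
    (hindep : IndepFun U ξ₀ P) :
    ∀ y z : ℝ, 0 ≤ y → 0 ≤ z →
      (P {ω | (1 - U ω) * ξ₀ ω ≤ y ∧ U ω * ξ₀ ω < z}).toReal
        = μ⁻¹ * ∫ ω, max (min z (ξ ω) - max (ξ ω - y) 0) 0 ∂P := by
  intro y z hy hz
  have hξae : AEMeasurable ξ P := hξint.aemeasurable
  set F : ℝ → ℝ := fun x => max (min z x - max (x - y) 0) 0 with hF
  have hFcont : Continuous F := by
    apply Continuous.max _ continuous_const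
    exact ((continuous_const.min continuous_id).sub
      ((continuous_id.sub continuous_const).max continuous_const))
  have hFnonneg : ∀ x, 0 ≤ F x := fun x => le_max_right _ _
  have hFle : ∀ x, F x ≤ z := fun x =>
    max_le (le_trans (sub_le_self _ (le_max_right _ _)) (min_le_left z x)) hz
  -- null set of nonpositive ξ
  have hnullξ : P {ω | ξ ω ≤ 0} = 0 := by
    have := hξpos
    rw [Filter.eventually_iff, mem_ae_iff] at this
    convert this using 2
    ext ω; simp [not_lt]
  -- ξ₀ ≤ 0 is null
  have hnullξ₀ : P {ω | ξ₀ ω ≤ 0} = 0 := by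
    have h0 := hsize 0 le_rfl
    rw [Measure.restrict_eq_zero.mpr hnullξ] at h0
    simp only [integral_zero_measure, mul_zero] at h0
    exact (ENNReal.toReal_eq_zero_iff _).mp h0 |>.resolve_right (measure_ne_top P _)
  set ν₀ : Measure ℝ := Measure.map ξ₀ P with hν₀
  set νξ : Measure ℝ := Measure.map ξ P with hνξ
  set g : ℝ → ℝ≥0∞ := fun x => ENNReal.ofReal (x / μ) with hg
  have hgmeas : Measurable g := ENNReal.measurable_ofReal.comp (measurable_id.div_const μ)
  set ρ : Measure ℝ := νξ.withDensity g with hρ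
  have hξdiv : Integrable (fun ω => ξ ω / μ) P := hξint.div_const μ
  -- formula for ρ (Iic x)
  have hρIic : ∀ x : ℝ, ρ (Set.Iic x) = ENNReal.ofReal (μ⁻¹ * ∫ ω in {ω | ξ ω ≤ x}, ξ ω ∂P) := by
    intro x
    have hpre : ξ ⁻¹' Set.Iic x = {ω | ξ ω ≤ x} := rfl
    rw [hρ, withDensity_apply _ measurableSet_Iic,
      Measure.restrict_map_of_aemeasurable hξae measurableSet_Iic, hpre,
      lintegral_map' (hgmeas.aemeasurable) (hξae.restrict)]
    rw [← ofReal_integral_eq_lintegral_ofReal (hξdiv.restrict)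
      (Filter.Eventually.filter_mono (ae_mono (Measure.restrict_le_self))
        (hξpos.mono fun ω hω => div_nonneg hω.le hμpos.le))]
    congr 1
    rw [integral_div, div_eq_inv_mul]
  haveI : IsFiniteMeasure ρ := by
    constructor
    rw [hρ, withDensity_apply _ MeasurableSet.univ, Measure.restrict_univ,
      lintegral_map' (hgmeas.aemeasurable) hξae,
      ← ofReal_integral_eq_lintegral_ofReal hξdiv
        (hξpos.mono fun ω hω => div_nonneg hω.le hμpos.le)]
    exact ENNReal.ofReal_lt_top
  haveI : IsProbabilityMeasure ν₀ := Measure.isProbabilityMeasure_map hmeasξ₀.aemeasurable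
  have hν₀Iic : ∀ x : ℝ, ν₀ (Set.Iic x) = P {ω | ξ₀ ω ≤ x} := fun x => by
    rw [hν₀, Measure.map_apply hmeasξ₀ measurableSet_Iic]; rfl
  -- the key identity of measures
  have key : ν₀ = ρ := by
    refine Measure.ext_of_Iic ν₀ ρ (fun x => ?_)
    rcases le_or_gt 0 x with hx | hx
    · rw [hν₀Iic x, hρIic x, ← hsize x hx, ENNReal.ofReal_toReal (measure_ne_top P _)]
    · have h1 : ν₀ (Set.Iic x) = 0 := by
        refine le_antisymm ?_ (zero_le)
        rw [← hnullξ₀, ← hν₀Iic 0]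
        exact measure_mono (Set.Iic_subset_Iic.mpr hx.le)
      have h2 : ρ (Set.Iic x) = 0 := by
        rw [hρIic x]
        have : P.restrict {ω | ξ ω ≤ x} = 0 := by
          rw [Measure.restrict_eq_zero]
          refine le_antisymm ?_ (zero_le)
          rw [← hnullξ]
          exact measure_mono (fun ω (hω : ξ ω ≤ x) => le_trans hω hx.le)
        rw [this]
        simp
      rw [h1, h2]
  -- independence: law of the pair
  have hpair : Measure.map (fun ω => (ξ₀ ω, U ω)) P = ν₀.prod (Measure.map U P) :=
    (indepFun_iff_map_prod_eq_prod_map_map hmeasξ₀.aemeasurable hmeasU.aemeasurable).mp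
      hindep.symm
  set S : Set (ℝ × ℝ) := {p : ℝ × ℝ | (1 - p.2) * p.1 ≤ y ∧ p.2 * p.1 < z} with hS
  have hSmeas : MeasurableSet S := by
    have h1 : MeasurableSet {p : ℝ × ℝ | (1 - p.2) * p.1 ≤ y} :=
      measurableSet_le (by fun_prop) measurable_const
    have h2 : MeasurableSet {p : ℝ × ℝ | p.2 * p.1 < z} :=
      measurableSet_lt (by fun_prop) measurable_const
    rw [hS, Set.setOf_and]
    exact h1.inter h2
  have hevent : {ω | (1 - U ω) * ξ₀ ω ≤ y ∧ U ω * ξ₀ ω < z}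
      = (fun ω => (ξ₀ ω, U ω)) ⁻¹' S := rfl
  have hae0 : ∀ᵐ x ∂ν₀, 0 < x := by
    rw [ae_iff]
    refine le_antisymm ?_ (zero_le)
    rw [← hnullξ₀, ← hν₀Iic 0]
    exact measure_mono (fun t (ht : ¬ 0 < t) => not_lt.mp ht)
  have hfmeas : Measurable (fun x : ℝ => ENNReal.ofReal (F x / x)) :=
    ENNReal.measurable_ofReal.comp (hFcont.measurable.div measurable_id)
  have hFξint : Integrable (fun ω => F (ξ ω)) P := by
    refine Integrable.mono' (integrable_const z)
      (hFcont.comp_aestronglyMeasurable hξint.1) (Filter.Eventually.of_forall fun ω => ?_)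
    rw [Real.norm_eq_abs, abs_of_nonneg (hFnonneg _)]
    exact hFle _
  -- main computation
  have main : P {ω | (1 - U ω) * ξ₀ ω ≤ y ∧ U ω * ξ₀ ω < z}
      = ENNReal.ofReal (μ⁻¹ * ∫ ω, F (ξ ω) ∂P) := by
    rw [hevent, ← Measure.map_apply (hmeasξ₀.prodMk hmeasU) hSmeas, hpair, hU,
      Measure.prod_apply hSmeas]
    have hsect : ∀ᵐ x ∂ν₀, (volume.restrict (Set.Icc (0:ℝ) 1)) (Prod.mk x ⁻¹' S)
        = ENNReal.ofReal (F x / x) := by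
      refine hae0.mono fun x hx => ?_
      have : Prod.mk x ⁻¹' S = {u : ℝ | (1 - u) * x ≤ y ∧ u * x < z} := rfl
      rw [this, sect_measure hx hy hz]
    rw [lintegral_congr_ae hsect, key, hρ,
      lintegral_withDensity_eq_lintegral_mul νξ hgmeas hfmeas, hνξ]
    simp only [Pi.mul_apply]
    rw [lintegral_map' (by
      have hm : AEMeasurable (fun a => g a * ENNReal.ofReal (F a / a)) (Measure.map ξ P) :=
        (hgmeas.mul hfmeas).aemeasurable
      exact hm) hξae]
    have heq : ∀ᵐ ω ∂P, g (ξ ω) * ENNReal.ofReal (F (ξ ω) / ξ ω)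
        = ENNReal.ofReal (μ⁻¹ * F (ξ ω)) := by
      refine hξpos.mono fun ω hω => ?_
      simp only [hg]
      rw [← ENNReal.ofReal_mul (div_nonneg hω.le hμpos.le)]
      congr 1
      field_simp
    rw [lintegral_congr_ae heq,
      ← ofReal_integral_eq_lintegral_ofReal (hFξint.const_mul μ⁻¹)
        (Filter.Eventually.of_forall fun ω =>
          mul_nonneg (inv_nonneg.mpr hμpos.le) (hFnonneg _)),
      integral_const_mul]
  rw [main, ENNReal.toReal_ofReal
    (mul_nonneg (inv_nonneg.mpr hμpos.le) (integral_nonneg fun ω => hFnonneg _))]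
end

section
/- For fixed t₀ ∈ ℝ, the map T : ℝ × D(ℝ) → D(ℝ) defined by T(t₀, f) = f(t₀ + ·) is continuous with respect to the product topology on ℝ × D(ℝ), where D(ℝ) carries the Skorokhod J₁ topology, and is Borel measurable. -/
open Filter Topology

/-- Sequential characterization of convergence in the Skorokhod `J₁` topology on `D(ℝ)`:
there are strictly increasing continuous time changes `lam n` of `ℝ` (with
`lam n (±∞) = ±∞`) such that on every compact interval both `f n ∘ lam n → g`
and `lam n → id` uniformly. -/
def J1TendstoSeq (f : ℕ → ℝ → ℝ) (g : ℝ → ℝ) : Prop :=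
  ∃ lam : ℕ → ℝ → ℝ,
    (∀ n, StrictMono (lam n) ∧ Continuous (lam n) ∧
      Tendsto (lam n) atTop atTop ∧ Tendsto (lam n) atBot atBot) ∧
    ∀ a b : ℝ, a < b →
      Tendsto (fun n => ⨆ u : Set.Icc a b, |f n (lam n ↑u) - g ↑u|) atTop (𝓝 0) ∧
      Tendsto (fun n => ⨆ u : Set.Icc a b, |lam n ↑u - ↑u|) atTop (𝓝 0)

lemma shiftSup (g : ℝ → ℝ) (t a b : ℝ) :
    (⨆ u : Set.Icc a b, g (t + ↑u)) = ⨆ v : Set.Icc (t + a) (t + b), g ↑v := by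
  rw [iSup, iSup]
  congr 1
  ext y
  simp only [Set.mem_range]
  constructor
  · rintro ⟨⟨u, hu1, hu2⟩, rfl⟩
    exact ⟨⟨t + u, Set.mem_Icc.mpr ⟨by linarith, by linarith⟩⟩, rfl⟩
  · rintro ⟨⟨v, hv1, hv2⟩, rfl⟩
    refine ⟨⟨v - t, Set.mem_Icc.mpr ⟨by linarith, by linarith⟩⟩, ?_⟩
    show g (t + (v - t)) = g v
    congr 1
    ring

theorem stmt6
    {D : Type*} [MetricSpace D] [MeasurableSpace D] [BorelSpace D]
    (F : D → ℝ → ℝ)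
    (hchar : ∀ (x : ℕ → D) (y : D),
      Tendsto x atTop (𝓝 y) ↔ J1TendstoSeq (fun n => F (x n)) (F y))
    (shift : ℝ × D → D)
    (hshift : ∀ (t : ℝ) (f : D) (s : ℝ), F (shift (t, f)) s = F f (t + s)) :
    Continuous shift ∧ Measurable shift := by
  have hcont : Continuous shift := by
    rw [continuous_iff_seqContinuous]
    intro x p hx
    obtain ⟨t, f0⟩ := p
    have ht : Tendsto (fun n => (x n).1) atTop (𝓝 t) :=
      (continuous_fst.tendsto _).comp hx
    have hf : Tendsto (fun n => (x n).2) atTop (𝓝 f0) :=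
      (continuous_snd.tendsto _).comp hx
    obtain ⟨lam, hlam, hconv⟩ := (hchar (fun n => (x n).2) f0).mp hf
    refine (hchar (fun n => shift (x n)) (shift (t, f0))).mpr ?_
    have hFx : ∀ n s, F (shift (x n)) s = F (x n).2 ((x n).1 + s) := fun n s =>
      hshift (x n).1 (x n).2 s
    refine ⟨fun n u => lam n (t + u) - (x n).1, fun n => ?_, fun a b hab => ?_⟩
    · refine ⟨?_, ?_, ?_, ?_⟩
      · intro u v huv
        have := (hlam n).1 (show t + u < t + v by linarith)
        simpa using sub_lt_sub_right this (x n).1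
      · exact ((hlam n).2.1.comp (continuous_const.add continuous_id)).sub continuous_const
      · simp only [sub_eq_add_neg]
        exact tendsto_atTop_add_const_right atTop _
          ((hlam n).2.2.1.comp (tendsto_atTop_add_const_left atTop t tendsto_id))
      · simp only [sub_eq_add_neg]
        exact tendsto_atBot_add_const_right atBot _
          ((hlam n).2.2.2.comp (tendsto_atBot_add_const_left atBot t tendsto_id))
    · constructor
      · have key : ∀ n, (⨆ u : Set.Icc a b,
            |F (shift (x n)) (lam n (t + ↑u) - (x n).1) - F (shift (t, f0)) ↑u|)
            = ⨆ v : Set.Icc (t + a) (t + b), |F (x n).2 (lam n ↑v) - F f0 ↑v| := by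
          intro n
          rw [← shiftSup (fun v => |F (x n).2 (lam n v) - F f0 v|) t a b]
          congr 1
          funext u
          rw [hFx, hshift]
          congr 2
          ring
        simp only [key]
        exact (hconv (t + a) (t + b) (by linarith)).1
      · have hc : Tendsto (fun n => |t - (x n).1|) atTop (𝓝 0) := by
          have := ((ht.const_sub t).abs)
          simpa using this
        have hB := (hconv (t + a) (t + b) (by linarith)).2
        have hsum : Tendsto (fun n =>
            (⨆ v : Set.Icc (t + a) (t + b), |lam n ↑v - ↑v|) + |t - (x n).1|)
            atTop (𝓝 0) := by
          simpa using hB.add hc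
        refine squeeze_zero (fun n => Real.iSup_nonneg fun u => abs_nonneg _)
          (fun n => ?_) hsum
        refine Real.iSup_le (fun u => ?_)
          (add_nonneg (Real.iSup_nonneg fun v => abs_nonneg _) (abs_nonneg _))
        obtain ⟨u, hu⟩ := u
        have hmem : t + u ∈ Set.Icc (t + a) (t + b) := by
          rcases Set.mem_Icc.mp hu with ⟨h1, h2⟩
          exact Set.mem_Icc.mpr ⟨by linarith, by linarith⟩
        have hbdd : BddAbove (Set.range fun v : Set.Icc (t + a) (t + b) => |lam n ↑v - ↑v|) := by
          rw [show (fun v : Set.Icc (t + a) (t + b) => |lam n ↑v - ↑v|)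
              = (Set.Icc (t + a) (t + b)).domRestrict (fun v => |lam n v - v|) from rfl,
            Set.range_domRestrict]
          exact (isCompact_Icc.image (((hlam n).2.1.sub continuous_id).abs)).bddAbove
        have h1 : |lam n (t + u) - (t + u)| ≤
            ⨆ v : Set.Icc (t + a) (t + b), |lam n ↑v - ↑v| :=
          le_ciSup hbdd (⟨t + u, hmem⟩ : Set.Icc (t + a) (t + b))
        calc |lam n (t + u) - (x n).1 - u|
            = |(lam n (t + u) - (t + u)) + (t - (x n).1)| := by congr 1; ring_nf
          _ ≤ |lam n (t + u) - (t + u)| + |t - (x n).1| := abs_add_le _ _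
          _ ≤ _ := add_le_add h1 le_rfl
  exact ⟨hcont, hcont.measurable⟩
end

section
/- Addition is continuous on D(ℝ) × D(ℝ) at every pair (x, y) with Disc(x) ∩ Disc(y) = ∅, where Disc(f) denotes the set of discontinuity points of f; consequently, for any finite family f₁,…,fₙ ∈ D(ℝ) with pairwise disjoint discontinuity sets, if f_k^{(m)} → f_k in the J₁ topology on D(ℝ) as m → ∞ for each k, then Σ_{k=1}^n f_k^{(m)} → Σ_{k=1}^n f_k in the J₁ topology. -/
open Filter Topology

/-- `f` is càdlàg: right-continuous with finite left limits at every point. -/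
def Cadlag (f : ℝ → ℝ) : Prop :=
  ∀ t : ℝ, ContinuousWithinAt f (Set.Ici t) t ∧
    ∃ l : ℝ, Tendsto f (nhdsWithin t (Set.Iio t)) (𝓝 l)

/-- The set of discontinuity points of `f`. -/
def Disc (f : ℝ → ℝ) : Set ℝ := {t | ¬ ContinuousAt f t}

noncomputable def llim (f : ℝ → ℝ) (t : ℝ) : ℝ := limUnder (𝓝[<] t) f

lemma llim_spec {f : ℝ → ℝ} (hf : Cadlag f) (t : ℝ) :
    Tendsto f (𝓝[<] t) (𝓝 (llim f t)) := by
  obtain ⟨l, hl⟩ := (hf t).2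
  have h : llim f t = l := hl.limUnder_eq
  rw [h]; exact hl

lemma llim_eq_of_continuousAt {f : ℝ → ℝ} {t : ℝ} (h : ContinuousAt f t) :
    llim f t = f t :=
  (h.tendsto.mono_left nhdsWithin_le_nhds).limUnder_eq

lemma not_continuousAt_of_jump {f : ℝ → ℝ} {t : ℝ} (h : llim f t ≠ f t) :
    ¬ ContinuousAt f t := fun hc => h (llim_eq_of_continuousAt hc)

/-- right continuity, metric form -/
lemma rc_metric {f : ℝ → ℝ} (hf : Cadlag f) (t : ℝ) {ε : ℝ} (hε : 0 < ε) :
    ∃ δ > 0, ∀ s, t ≤ s → s < t + δ → |f s - f t| ≤ ε := by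
  have h := (hf t).1
  have h2 : {s | |f s - f t| ≤ ε} ∈ 𝓝[Set.Ici t] t := by
    have := h (Metric.closedBall_mem_nhds (f t) hε)
    simpa [Set.preimage, Metric.closedBall, Real.dist_eq] using this
  rw [Metric.mem_nhdsWithin_iff] at h2
  obtain ⟨δ, hδ, hsub⟩ := h2
  refine ⟨δ, hδ, fun s hs1 hs2 => ?_⟩
  exact hsub ⟨by rw [Metric.mem_ball, Real.dist_eq, abs_sub_lt_iff]; constructor <;> linarith, hs1⟩

/-- left limit, metric form -/
lemma lc_metric {f : ℝ → ℝ} (hf : Cadlag f) (t : ℝ) {ε : ℝ} (hε : 0 < ε) :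
    ∃ δ > 0, ∀ s, t - δ < s → s < t → |f s - llim f t| ≤ ε := by
  have h := llim_spec hf t
  have h2 : {s | |f s - llim f t| ≤ ε} ∈ 𝓝[Set.Iio t] t := by
    have := h (Metric.closedBall_mem_nhds (llim f t) hε)
    simpa [Set.preimage, Metric.closedBall, Real.dist_eq] using this
  rw [Metric.mem_nhdsWithin_iff] at h2
  obtain ⟨δ, hδ, hsub⟩ := h2
  refine ⟨δ, hδ, fun s hs1 hs2 => ?_⟩
  exact hsub ⟨by rw [Metric.mem_ball, Real.dist_eq, abs_sub_lt_iff]; constructor <;> linarith, hs2⟩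

/-- a càdlàg function is bounded on compacts -/
lemma cadlag_bdd {f : ℝ → ℝ} (hf : Cadlag f) (a b : ℝ) :
    ∃ C, ∀ t ∈ Set.Icc a b, |f t| ≤ C := by
  refine IsCompact.induction_on (p := fun s => ∃ C, ∀ t ∈ s, |f t| ≤ C) isCompact_Icc
    ⟨0, by simp⟩ (fun s t hst ⟨C, hC⟩ => ⟨C, fun x hx => hC x (hst hx)⟩)
    (fun s t ⟨C, hC⟩ ⟨D, hD⟩ => ⟨max C D, fun x hx => by
      rcases hx with hx | hx
      · exact le_trans (hC x hx) (le_max_left _ _)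
      · exact le_trans (hD x hx) (le_max_right _ _)⟩) (fun x _ => ?_)
  obtain ⟨l, hl⟩ := (hf x).2
  have hr : ∀ᶠ s in 𝓝[Set.Ici x] x, |f s| ≤ |f x| + |l| + 1 := by
    have := (hf x).1
    filter_upwards [this (Metric.closedBall_mem_nhds (f x) one_pos)] with s hs
    rw [Set.mem_preimage, Metric.mem_closedBall, Real.dist_eq] at hs
    have := abs_sub_abs_le_abs_sub (f s) (f x)
    have hl0 : (0:ℝ) ≤ |l| := abs_nonneg _
    linarith
  have hlft : ∀ᶠ s in 𝓝[Set.Iio x] x, |f s| ≤ |f x| + |l| + 1 := by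
    filter_upwards [hl (Metric.closedBall_mem_nhds l one_pos)] with s hs
    rw [Set.mem_preimage, Metric.mem_closedBall, Real.dist_eq] at hs
    have := abs_sub_abs_le_abs_sub (f s) l
    have hf0 : (0:ℝ) ≤ |f x| := abs_nonneg _
    linarith
  have hall : ∀ᶠ s in 𝓝 x, |f s| ≤ |f x| + |l| + 1 := by
    have hu : 𝓝 x = 𝓝[Set.Iio x ∪ Set.Ici x] x := by
      rw [Set.Iio_union_Ici, nhdsWithin_univ]
    rw [hu, nhdsWithin_union]
    exact ⟨hlft, hr⟩
  exact ⟨{s | |f s| ≤ |f x| + |l| + 1}, nhdsWithin_le_nhds hall,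
    ⟨|f x| + |l| + 1, fun t ht => ht⟩⟩

/-- finitely many ε-jumps on a compact interval -/
lemma finite_jumps {f : ℝ → ℝ} (hf : Cadlag f) (a b : ℝ) {ε : ℝ} (hε : 0 < ε) :
    {t ∈ Set.Icc a b | ε ≤ |f t - llim f t|}.Finite := by
  have hε3 : 0 < ε / 3 := by linarith
  -- for each x, a neighborhood where the only possible big jump is x itself
  have key : ∀ x : ℝ, ∃ U ∈ 𝓝 x, ∀ s ∈ U, s ≠ x → |f s - llim f s| < ε := by
    intro x
    obtain ⟨δ, hδ, hright⟩ := rc_metric hf x hε3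
    obtain ⟨δ', hδ', hleft⟩ := lc_metric hf x hε3
    refine ⟨Set.Ioo (x - δ') (x + δ), Ioo_mem_nhds (by linarith) (by linarith), ?_⟩
    rintro s ⟨hs1, hs2⟩ hsx
    rcases lt_or_gt_of_ne hsx with hlt | hgt
    · -- s < x : both f s and llim f s are within ε/3 of llim f x
      have hfs : |f s - llim f x| ≤ ε / 3 := hleft s hs1 hlt
      have hll : |llim f s - llim f x| ≤ ε / 3 := by
        have htd : Tendsto (fun v => |f v - llim f x|) (𝓝[<] s) (𝓝 |llim f s - llim f x|) :=
          ((llim_spec hf s).sub tendsto_const_nhds).abs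
        refine le_of_tendsto htd ?_
        filter_upwards [Ioo_mem_nhdsLT_of_mem (Set.mem_Ioc.2 ⟨hs1, le_refl s⟩)] with v hv
        exact hleft v hv.1 (lt_trans hv.2 hlt)
      calc |f s - llim f s| ≤ |f s - llim f x| + |llim f s - llim f x| := by
            rw [abs_sub_comm (llim f s) (llim f x)]; exact abs_sub_le _ _ _
        _ < ε := by linarith
    · -- x < s
      have hfs : |f s - f x| ≤ ε / 3 := hright s (le_of_lt hgt) hs2
      have hll : |llim f s - f x| ≤ ε / 3 := by
        have htd : Tendsto (fun v => |f v - f x|) (𝓝[<] s) (𝓝 |llim f s - f x|) :=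
          ((llim_spec hf s).sub tendsto_const_nhds).abs
        refine le_of_tendsto htd ?_
        filter_upwards [Ioo_mem_nhdsLT_of_mem (Set.mem_Ioc.2 ⟨hgt, le_refl s⟩)] with v hv
        exact hright v (le_of_lt hv.1) (lt_trans hv.2 hs2)
      calc |f s - llim f s| ≤ |f s - f x| + |llim f s - f x| := by
            rw [abs_sub_comm (llim f s) (f x)]; exact abs_sub_le _ _ _
        _ < ε := by linarith
  choose U hU hUs using key
  obtain ⟨T, hTmem, hTcov⟩ := isCompact_Icc.elim_nhds_subcover U (fun x _ => hU x)
  refine Set.Finite.subset T.finite_toSet (fun t ht => ?_)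
  obtain ⟨ht1, ht2⟩ := ht
  obtain ⟨x, hxT, hxU⟩ := Set.mem_iUnion₂.1 (hTcov ht1)
  by_cases h : t = x
  · rwa [h]
  · exact absurd ht2 (not_le.2 (hUs x t hxU h))

/-- oscillation control between nearby points with no big jump in between -/
lemma osc_control {f : ℝ → ℝ} (hf : Cadlag f) (a b : ℝ) (hab : a ≤ b) {ε : ℝ} (hε : 0 < ε) :
    ∃ δ > 0, ∀ u v : ℝ, u ∈ Set.Icc a b → v ∈ Set.Icc a b → u ≤ v → v - u ≤ δ →
      (∀ t, u < t → t ≤ v → |f t - llim f t| < ε) → |f v - f u| ≤ 3 * ε := by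
  have hε3 : 0 < ε / 3 := by linarith
  have key : ∀ x : ℝ, ∃ r > 0, ∃ r' > 0, ∀ u v : ℝ,
      x - r' < u → u < x + r → x - r' < v → v < x + r → u ≤ v →
      (∀ t, u < t → t ≤ v → |f t - llim f t| < ε) → |f v - f u| ≤ 3 * ε := by
    intro x
    obtain ⟨δ, hδ, hright⟩ := rc_metric hf x hε3
    obtain ⟨δ', hδ', hleft⟩ := lc_metric hf x hε3
    refine ⟨δ, hδ, δ', hδ', fun u v hu1 hu2 hv1 hv2 huv hnj => ?_⟩
    rcases le_or_gt x u with hxu | hux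
    · -- x ≤ u ≤ v < x + δ
      have h1 := hright u hxu hu2
      have h2 := hright v (le_trans hxu huv) hv2
      calc |f v - f u| ≤ |f v - f x| + |f u - f x| := by
            rw [abs_sub_comm (f u) (f x)]; exact abs_sub_le _ _ _
        _ ≤ 3 * ε := by linarith
    · rcases lt_or_ge v x with hvx | hxv
      · -- u ≤ v < x
        have h1 := hleft u hu1 hux
        have h2 := hleft v hv1 hvx
        calc |f v - f u| ≤ |f v - llim f x| + |f u - llim f x| := by
              rw [abs_sub_comm (f u) (llim f x)]; exact abs_sub_le _ _ _
          _ ≤ 3 * ε := by linarith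
      · -- u < x ≤ v : x is in (u, v]
        have hjx : |f x - llim f x| < ε := hnj x hux hxv
        have h1 := hleft u hu1 hux
        have h2 : |f v - f x| ≤ ε / 3 := hright v hxv hv2
        calc |f v - f u| = |(f v - f x) + (f x - llim f x) + (llim f x - f u)| := by ring_nf
          _ ≤ |f v - f x| + |f x - llim f x| + |llim f x - f u| :=
              (abs_add_three _ _ _)
          _ ≤ 3 * ε := by rw [abs_sub_comm (llim f x) (f u)]; linarith
  choose r hr r' hr' hkey using key
  obtain ⟨T, hTmem, hTcov⟩ := isCompact_Icc.elim_nhds_subcover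
    (fun x => Set.Ioo (x - r' x / 2) (x + r x / 2))
    (fun x _ => Ioo_mem_nhds (by have := hr' x; linarith) (by have := hr x; linarith))
  have hTne : T.Nonempty := by
    obtain ⟨x, hx, _⟩ := Set.mem_iUnion₂.1 (hTcov (Set.mem_Icc.2 ⟨le_refl a, hab⟩))
    exact ⟨x, hx⟩
  have hinfpos : 0 < T.inf' hTne (fun x => min (r x) (r' x)) :=
    (Finset.lt_inf'_iff hTne).2 (fun x _ => lt_min (hr x) (hr' x))
  refine ⟨T.inf' hTne (fun x => min (r x) (r' x)) / 2, by linarith, fun u v hu hv huv hd hnj => ?_⟩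
  obtain ⟨x, hxT, hxU⟩ := Set.mem_iUnion₂.1 (hTcov hu)
  obtain ⟨hu1, hu2⟩ := hxU
  have hinfle : T.inf' hTne (fun x => min (r x) (r' x)) ≤ min (r x) (r' x) :=
    Finset.inf'_le _ hxT
  have h1 : min (r x) (r' x) ≤ r x := min_le_left _ _
  have h2 : min (r x) (r' x) ≤ r' x := min_le_right _ _
  have hrx := hr x
  exact hkey x u v (by linarith) (by linarith) (by linarith) (by linarith) huv hnj

section Inverse

lemma lam_right_inv {lam : ℝ → ℝ} (hct : Continuous lam)
    (hT : Tendsto lam atTop atTop) (hB : Tendsto lam atBot atBot) (w : ℝ) :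
    lam (Function.invFun lam w) = w :=
  Function.invFun_eq (hct.surjective hT hB w)

lemma lam_left_inv {lam : ℝ → ℝ} (hsm : StrictMono lam) (v : ℝ) :
    Function.invFun lam (lam v) = v :=
  Function.leftInverse_invFun hsm.injective v

lemma inv_strictMono {lam : ℝ → ℝ} (hsm : StrictMono lam) (hct : Continuous lam)
    (hT : Tendsto lam atTop atTop) (hB : Tendsto lam atBot atBot) :
    StrictMono (Function.invFun lam) := by
  intro u v huv
  have hu := lam_right_inv hct hT hB u
  have hv := lam_right_inv hct hT hB v
  rw [← hsm.lt_iff_lt, hu, hv]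
  exact huv

lemma inv_dev_bound {lam : ℝ → ℝ} (hsm : StrictMono lam) (hct : Continuous lam)
    (hT : Tendsto lam atTop atTop) (hB : Tendsto lam atBot atBot)
    {R e : ℝ} (he : 0 ≤ e) (he1 : e ≤ 1)
    (hdev : ∀ t, |t| ≤ R + 1 → |lam t - t| ≤ e) :
    ∀ w, |w| ≤ R → |Function.invFun lam w - w| ≤ e := by
  intro w hw
  have hR : 0 ≤ R := le_trans (abs_nonneg w) hw
  rw [abs_le] at hw
  have h1 : lam (w - e) ≤ w := by
    have := hdev (w - e) (by rw [abs_le]; constructor <;> linarith)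
    rw [abs_le] at this; linarith
  have h2 : w ≤ lam (w + e) := by
    have := hdev (w + e) (by rw [abs_le]; constructor <;> linarith)
    rw [abs_le] at this; linarith
  have hlow : w - e ≤ Function.invFun lam w := by
    rw [← hsm.le_iff_le, lam_right_inv hct hT hB]; exact h1
  have hhigh : Function.invFun lam w ≤ w + e := by
    rw [← hsm.le_iff_le, lam_right_inv hct hT hB]; exact h2
  rw [abs_le]; constructor <;> linarith

end Inverse

section Bump

noncomputable def bump (d p u : ℝ) : ℝ := max 0 (1 - |u - p| / d)

lemma bump_nonneg (d p u : ℝ) : 0 ≤ bump d p u := le_max_left _ _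

lemma bump_le_one {d : ℝ} (hd : 0 < d) (p u : ℝ) : bump d p u ≤ 1 := by
  apply max_le (by norm_num)
  have : 0 ≤ |u - p| / d := div_nonneg (abs_nonneg _) (le_of_lt hd)
  linarith

lemma bump_self {d : ℝ} (hd : 0 < d) (p : ℝ) : bump d p p = 1 := by
  simp [bump]

lemma bump_eq_zero {d p u : ℝ} (hd : 0 < d) (h : d ≤ |u - p|) : bump d p u = 0 := by
  apply max_eq_left
  have : 1 ≤ |u - p| / d := (one_le_div hd).2 h
  linarith

lemma bump_ne_zero {d p u : ℝ} (hd : 0 < d) (h : bump d p u ≠ 0) : |u - p| < d := by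
  by_contra hc
  exact h (bump_eq_zero hd (not_lt.1 hc))

lemma bump_lipschitz {d : ℝ} (hd : 0 < d) (p u v : ℝ) :
    |bump d p v - bump d p u| ≤ |v - u| / d := by
  have h1 : |bump d p v - bump d p u| ≤ |(1 - |v - p| / d) - (1 - |u - p| / d)| := by
    rw [bump, bump, max_comm 0 (1 - |v - p| / d), max_comm 0 (1 - |u - p| / d)]
    exact abs_max_sub_max_le_abs _ _ _
  have h2 : (1 - |v - p| / d) - (1 - |u - p| / d) = (|u - p| - |v - p|) / d := by ring
  rw [h2] at h1
  refine le_trans h1 ?_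
  rw [abs_div, abs_of_pos hd]
  apply div_le_div_of_nonneg_right ?_ (le_of_lt hd) |>.trans_eq rfl
  have := abs_abs_sub_abs_le_abs_sub (u - p) (v - p)
  calc |(|u - p| - |v - p|)| ≤ |(u - p) - (v - p)| := this
    _ = |v - u| := by rw [← abs_neg]; ring_nf

noncomputable def interp (P : Finset ℝ) (g : ℝ → ℝ) (d : ℝ) (u : ℝ) : ℝ :=
  u + ∑ p ∈ P, (g p - p) * bump d p u

lemma interp_continuous (P : Finset ℝ) (g : ℝ → ℝ) {d : ℝ} (hd : 0 < d) :
    Continuous (interp P g d) := by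
  apply continuous_id.add
  apply continuous_finset_sum
  intro p _
  apply continuous_const.mul
  exact continuous_const.max ((continuous_const.sub
    (((continuous_id.sub continuous_const).abs).div_const d)))

variable {P : Finset ℝ} {g : ℝ → ℝ} {d c : ℝ}

lemma bump_sum_le_one (hd : 0 < d)
    (hsep : ∀ p ∈ P, ∀ q ∈ P, p ≠ q → 2 * d ≤ |p - q|) (u : ℝ) :
    ∑ p ∈ P, bump d p u ≤ 1 := by
  classical
  set A := P.filter (fun p => bump d p u ≠ 0) with hA
  have hsum : ∑ p ∈ P, bump d p u = ∑ p ∈ A, bump d p u := by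
    refine (Finset.sum_filter_ne_zero P).symm
  have hcard : A.card ≤ 1 := by
    refine Finset.card_le_one.2 (fun p hp q hq => ?_)
    rw [hA, Finset.mem_filter] at hp hq
    by_contra hne
    have h1 := bump_ne_zero hd hp.2
    have h2 := bump_ne_zero hd hq.2
    have := hsep p hp.1 q hq.1 hne
    have : |p - q| ≤ |u - p| + |u - q| := by
      calc |p - q| = |(u - q) - (u - p)| := by ring_nf
        _ ≤ |u - q| + |u - p| := abs_sub _ _
        _ = |u - p| + |u - q| := by ring
    linarith
  rw [hsum]
  calc ∑ p ∈ A, bump d p u ≤ ∑ _p ∈ A, 1 :=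
        Finset.sum_le_sum (fun p _ => bump_le_one hd p u)
    _ = A.card := by simp
    _ ≤ 1 := by exact_mod_cast hcard

lemma interp_dev (hd : 0 < d) (hc0 : 0 ≤ c)
    (hsep : ∀ p ∈ P, ∀ q ∈ P, p ≠ q → 2 * d ≤ |p - q|)
    (hgc : ∀ p ∈ P, |g p - p| ≤ c) (u : ℝ) :
    |interp P g d u - u| ≤ c := by
  have h1 : |interp P g d u - u| = |∑ p ∈ P, (g p - p) * bump d p u| := by
    simp only [interp]; congr 1; ring
  rw [h1]
  calc |∑ p ∈ P, (g p - p) * bump d p u| ≤ ∑ p ∈ P, |(g p - p) * bump d p u| :=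
        Finset.abs_sum_le_sum_abs _ _
    _ ≤ ∑ p ∈ P, c * bump d p u := by
        refine Finset.sum_le_sum (fun p hp => ?_)
        rw [abs_mul, abs_of_nonneg (bump_nonneg d p u)]
        exact mul_le_mul_of_nonneg_right (hgc p hp) (bump_nonneg d p u)
    _ = c * ∑ p ∈ P, bump d p u := by rw [Finset.mul_sum]
    _ ≤ c * 1 := mul_le_mul_of_nonneg_left (bump_sum_le_one hd hsep u) hc0
    _ = c := mul_one c

lemma interp_fix (hd : 0 < d)
    (hsep : ∀ p ∈ P, ∀ q ∈ P, p ≠ q → 2 * d ≤ |p - q|) {p₀ : ℝ} (hp₀ : p₀ ∈ P) :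
    interp P g d p₀ = g p₀ := by
  rw [interp]
  have : ∑ p ∈ P, (g p - p) * bump d p p₀ = (g p₀ - p₀) * bump d p₀ p₀ := by
    refine Finset.sum_eq_single p₀ (fun q hq hne => ?_) (fun h => absurd hp₀ h)
    have : bump d q p₀ = 0 := by
      apply bump_eq_zero hd
      have := hsep p₀ hp₀ q hq (Ne.symm hne)
      linarith
    rw [this, mul_zero]
  rw [this, bump_self hd, mul_one]; ring

lemma interp_strictMono (hd : 0 < d) (hc0 : 0 ≤ c) (hcd : 2 * c < d)
    (hsep : ∀ p ∈ P, ∀ q ∈ P, p ≠ q → 2 * d ≤ |p - q|)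
    (hgc : ∀ p ∈ P, |g p - p| ≤ c) :
    StrictMono (interp P g d) := by
  classical
  intro u v huv
  have key : ∑ p ∈ P, |bump d p v - bump d p u| ≤ 2 * min 1 ((v - u) / d) := by
    set A := P.filter (fun p => bump d p u ≠ 0 ∨ bump d p v ≠ 0) with hA
    have hsum : ∑ p ∈ P, |bump d p v - bump d p u| = ∑ p ∈ A, |bump d p v - bump d p u| := by
      symm
      refine Finset.sum_subset (Finset.filter_subset _ _) (fun p hp hpn => ?_)
      rw [hA, Finset.mem_filter] at hpn
      push_neg at hpn
      obtain ⟨h1, h2⟩ := hpn hp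
      rw [h1, h2, sub_zero, abs_zero]
    have hcard : A.card ≤ 2 := by
      have hsub : A ⊆ P.filter (fun p => bump d p u ≠ 0) ∪ P.filter (fun p => bump d p v ≠ 0) := by
        intro p hp
        rw [hA, Finset.mem_filter] at hp
        rcases hp.2 with h | h
        · exact Finset.mem_union_left _ (Finset.mem_filter.2 ⟨hp.1, h⟩)
        · exact Finset.mem_union_right _ (Finset.mem_filter.2 ⟨hp.1, h⟩)
      have c1 : (P.filter (fun p => bump d p u ≠ 0)).card ≤ 1 := by
        refine Finset.card_le_one.2 (fun p hp q hq => ?_)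
        rw [Finset.mem_filter] at hp hq
        by_contra hne
        have h1 := bump_ne_zero hd hp.2
        have h2 := bump_ne_zero hd hq.2
        have h3 := hsep p hp.1 q hq.1 hne
        have : |p - q| ≤ |u - p| + |u - q| := by
          calc |p - q| = |(u - q) - (u - p)| := by ring_nf
            _ ≤ |u - q| + |u - p| := abs_sub _ _
            _ = |u - p| + |u - q| := by ring
        linarith
      have c2 : (P.filter (fun p => bump d p v ≠ 0)).card ≤ 1 := by
        refine Finset.card_le_one.2 (fun p hp q hq => ?_)
        rw [Finset.mem_filter] at hp hq
        by_contra hne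
        have h1 := bump_ne_zero hd hp.2
        have h2 := bump_ne_zero hd hq.2
        have h3 := hsep p hp.1 q hq.1 hne
        have : |p - q| ≤ |v - p| + |v - q| := by
          calc |p - q| = |(v - q) - (v - p)| := by ring_nf
            _ ≤ |v - q| + |v - p| := abs_sub _ _
            _ = |v - p| + |v - q| := by ring
        linarith
      calc A.card ≤ _ := Finset.card_le_card hsub
        _ ≤ _ := Finset.card_union_le _ _
        _ ≤ 2 := by omega
    have hterm : ∀ p ∈ A, |bump d p v - bump d p u| ≤ min 1 ((v - u) / d) := by
      intro p _
      apply le_min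
      · have b1 := bump_nonneg d p u
        have b2 := bump_nonneg d p v
        have b3 := bump_le_one hd p u
        have b4 := bump_le_one hd p v
        rw [abs_le]; constructor <;> linarith
      · have := bump_lipschitz hd p u v
        rwa [abs_of_pos (by linarith : (0:ℝ) < v - u)] at this
    rw [hsum]
    calc ∑ p ∈ A, |bump d p v - bump d p u| ≤ A.card * min 1 ((v - u) / d) := by
          have := Finset.sum_le_card_nsmul A _ _ hterm
          simpa [nsmul_eq_mul] using this
      _ ≤ 2 * min 1 ((v - u) / d) := by
          apply mul_le_mul_of_nonneg_right _ (le_min (by norm_num)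
            (div_nonneg (by linarith) (le_of_lt hd)))
          exact_mod_cast hcard
  have hpert : |∑ p ∈ P, (g p - p) * bump d p v - ∑ p ∈ P, (g p - p) * bump d p u|
      ≤ c * (2 * min 1 ((v - u) / d)) := by
    rw [← Finset.sum_sub_distrib]
    calc |∑ p ∈ P, ((g p - p) * bump d p v - (g p - p) * bump d p u)|
        ≤ ∑ p ∈ P, |(g p - p) * bump d p v - (g p - p) * bump d p u| :=
          Finset.abs_sum_le_sum_abs _ _
      _ = ∑ p ∈ P, |g p - p| * |bump d p v - bump d p u| := by
          refine Finset.sum_congr rfl (fun p _ => ?_)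
          rw [← mul_sub, abs_mul]
      _ ≤ ∑ p ∈ P, c * |bump d p v - bump d p u| :=
          Finset.sum_le_sum (fun p hp =>
            mul_le_mul_of_nonneg_right (hgc p hp) (abs_nonneg _))
      _ = c * ∑ p ∈ P, |bump d p v - bump d p u| := by rw [Finset.mul_sum]
      _ ≤ c * (2 * min 1 ((v - u) / d)) := mul_le_mul_of_nonneg_left key hc0
  have hfin : c * (2 * min 1 ((v - u) / d)) < v - u := by
    rcases le_total (v - u) d with h | h
    · have hmin : min 1 ((v - u) / d) ≤ (v - u) / d := min_le_right _ _
      have h2 : c * (2 * min 1 ((v - u) / d)) ≤ c * (2 * ((v - u) / d)) := by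
        apply mul_le_mul_of_nonneg_left _ hc0; linarith
      have h3 : c * (2 * ((v - u) / d)) = (2 * c) * ((v - u) / d) := by ring
      have h4 : (2 * c) * ((v - u) / d) < d * ((v - u) / d) := by
        apply mul_lt_mul_of_pos_right hcd
        exact div_pos (by linarith) hd
      have h5 : d * ((v - u) / d) = v - u := by field_simp
      linarith
    · have hmin : min 1 ((v - u) / d) ≤ 1 := min_le_left _ _
      have h2 : c * (2 * min 1 ((v - u) / d)) ≤ c * 2 := by
        apply mul_le_mul_of_nonneg_left _ hc0; linarith
      linarith
  have habs := abs_le.1 hpert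
  simp only [interp]
  linarith [habs.1]

lemma interp_tendsto_atTop (hd : 0 < d) (hc0 : 0 ≤ c)
    (hsep : ∀ p ∈ P, ∀ q ∈ P, p ≠ q → 2 * d ≤ |p - q|)
    (hgc : ∀ p ∈ P, |g p - p| ≤ c) :
    Tendsto (interp P g d) atTop atTop := by
  apply tendsto_atTop_mono (f := fun u => u - c)
  · intro u
    have := (abs_le.1 (interp_dev hd hc0 hsep hgc u)).1
    linarith
  · exact tendsto_atTop_add_const_right _ _ tendsto_id

lemma interp_tendsto_atBot (hd : 0 < d) (hc0 : 0 ≤ c)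
    (hsep : ∀ p ∈ P, ∀ q ∈ P, p ≠ q → 2 * d ≤ |p - q|)
    (hgc : ∀ p ∈ P, |g p - p| ≤ c) :
    Tendsto (interp P g d) atBot atBot := by
  apply tendsto_atBot_mono (f := fun u => u + c)
  · intro u
    have := (abs_le.1 (interp_dev hd hc0 hsep hgc u)).2
    linarith
  · exact tendsto_atBot_add_const_right _ _ tendsto_id

end Bump

/-- minimal gap of a finite set -/
lemma exists_gap (P : Finset ℝ) :
    ∃ d > 0, ∀ p ∈ P, ∀ q ∈ P, p ≠ q → 2 * d ≤ |p - q| := by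
  classical
  set S := (P ×ˢ P).filter (fun z => z.1 ≠ z.2) with hS
  rcases S.eq_empty_or_nonempty with h | h
  · refine ⟨1, one_pos, fun p hp q hq hne => ?_⟩
    exfalso
    have : (p, q) ∈ S := Finset.mem_filter.2 ⟨Finset.mem_product.2 ⟨hp, hq⟩, hne⟩
    rw [h] at this; exact absurd this (Finset.notMem_empty _)
  · refine ⟨S.inf' h (fun z => |z.1 - z.2|) / 2, ?_, fun p hp q hq hne => ?_⟩
    · have : 0 < S.inf' h (fun z => |z.1 - z.2|) := by
        refine (Finset.lt_inf'_iff h).2 (fun z hz => ?_)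
        rw [hS, Finset.mem_filter] at hz
        exact abs_pos.2 (sub_ne_zero.2 hz.2)
      linarith
    · have hmem : (p, q) ∈ S := Finset.mem_filter.2 ⟨Finset.mem_product.2 ⟨hp, hq⟩, hne⟩
      have := Finset.inf'_le (fun z : ℝ × ℝ => |z.1 - z.2|) hmem
      simp only at this
      linarith

lemma construct {n : ℕ} (f G lamf : Fin n → ℝ → ℝ) (K ε : ℝ) (hK : 0 ≤ K) (hε : 0 < ε)
    (J : Fin n → Finset ℝ)
    (hJ : ∀ k t, t ∈ Set.Icc (-(K+2)) (K+2) → ε / (4*(n:ℝ)+4) ≤ |f k t - llim (f k) t| → t ∈ J k)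
    (hJ' : ∀ k, ∀ p ∈ J k, p ∈ Set.Icc (-(K+2)) (K+2))
    (hJd : ∀ k j, ∀ p : ℝ, p ∈ J k → p ∈ J j → k = j)
    (P : Finset ℝ) (hPJ : ∀ k, J k ⊆ P) (hPmem : ∀ p ∈ P, ∃ k, p ∈ J k)
    (d : ℝ) (hd : 0 < d) (hsep : ∀ p ∈ P, ∀ q ∈ P, p ≠ q → 2*d ≤ |p - q|)
    (δ : Fin n → ℝ)
    (hosc : ∀ k, ∀ u v : ℝ, u ∈ Set.Icc (-(K+2)) (K+2) → v ∈ Set.Icc (-(K+2)) (K+2) →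
      u ≤ v → v - u ≤ δ k →
      (∀ t, u < t → t ≤ v → |f k t - llim (f k) t| < ε/(4*(n:ℝ)+4)) →
      |f k v - f k u| ≤ 3 * (ε/(4*(n:ℝ)+4)))
    (r : ℝ) (hr0 : 0 < r) (hrd : r ≤ d/4) (hr1 : r ≤ 1) (hrε : 2*r ≤ ε)
    (hrδ : ∀ k, 2*r ≤ δ k)
    (hlam : ∀ k, StrictMono (lamf k) ∧ Continuous (lamf k) ∧
      Tendsto (lamf k) atTop atTop ∧ Tendsto (lamf k) atBot atBot)
    (hE1 : ∀ k, ∀ t : ℝ, |t| ≤ K + 5 → |lamf k t - t| ≤ r)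
    (hE2 : ∀ k, ∀ v ∈ Set.Icc (-(K+2)) (K+2), |G k (lamf k v) - f k v| ≤ ε/(4*(n:ℝ)+4)) :
    ∃ ν : ℝ → ℝ, StrictMono ν ∧ Continuous ν ∧ Tendsto ν atTop atTop ∧
      Tendsto ν atBot atBot ∧ (∀ u, |ν u - u| ≤ ε) ∧
      (∀ u ∈ Set.Icc (-K) K, |∑ k, G k (ν u) - ∑ k, f k u| ≤ ε) := by
  classical
  have hn4 : (0:ℝ) < 4*(n:ℝ)+4 := by positivity
  set ε' := ε / (4*(n:ℝ)+4) with hε'def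
  have hε' : 0 < ε' := div_pos hε hn4
  set g : ℝ → ℝ := fun p => if h : ∃ k, p ∈ J k then lamf h.choose p else p with hgdef
  have hg : ∀ k, ∀ p ∈ J k, g p = lamf k p := by
    intro k p hp
    have hex : ∃ k, p ∈ J k := ⟨k, hp⟩
    have : g p = lamf hex.choose p := dif_pos hex
    rw [this, hJd hex.choose k p hex.choose_spec hp]
  have hgc : ∀ p ∈ P, |g p - p| ≤ r := by
    intro p hp
    obtain ⟨k, hk⟩ := hPmem p hp
    rw [hg k p hk]
    have hpI := hJ' k p hk
    rw [Set.mem_Icc] at hpI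
    exact hE1 k p (by rw [abs_le]; constructor <;> linarith)
  have hcd : 2 * r < d := by linarith
  set ν := interp P g d with hνdef
  have νSM : StrictMono ν := interp_strictMono hd (le_of_lt hr0) hcd hsep hgc
  have νdev : ∀ u, |ν u - u| ≤ r := fun u => interp_dev hd (le_of_lt hr0) hsep hgc u
  refine ⟨ν, νSM, interp_continuous P g hd,
    interp_tendsto_atTop hd (le_of_lt hr0) hsep hgc,
    interp_tendsto_atBot hd (le_of_lt hr0) hsep hgc,
    fun u => le_trans (νdev u) (by linarith), ?_⟩
  intro u hu
  rw [Set.mem_Icc] at hu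
  have hterm : ∀ k : Fin n, |G k (ν u) - f k u| ≤ 4 * ε' := by
    intro k
    obtain ⟨hsmk, hctk, hTk, hBk⟩ := hlam k
    set w := ν u with hwdef
    have hwu : |w - u| ≤ r := νdev u
    have hwuabs := abs_le.1 hwu
    have hw : |w| ≤ K + 1 := by rw [abs_le]; constructor <;> linarith
    set s := Function.invFun (lamf k) w with hsdef
    have hlams : lamf k s = w := lam_right_inv hctk hTk hBk w
    have hsw : |s - w| ≤ r := by
      refine inv_dev_bound hsmk hctk hTk hBk (le_of_lt hr0) hr1 (fun t ht => ?_) w hw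
      exact hE1 k t (by linarith)
    have hswabs := abs_le.1 hsw
    have hsu : |s - u| ≤ 2*r := by rw [abs_le]; constructor <;> linarith
    have hsuabs := abs_le.1 hsu
    have hsI : s ∈ Set.Icc (-(K+2)) (K+2) := by
      rw [Set.mem_Icc]; constructor <;> linarith
    have huI : u ∈ Set.Icc (-(K+2)) (K+2) := by
      rw [Set.mem_Icc]; constructor <;> linarith
    have αSM : StrictMono (fun t => Function.invFun (lamf k) (ν t)) :=
      (inv_strictMono hsmk hctk hTk hBk).comp νSM
    have hfix : ∀ t ∈ J k, Function.invFun (lamf k) (ν t) = t := by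
      intro t ht
      have h1 : ν t = g t := interp_fix hd hsep (hPJ k ht)
      rw [h1, hg k t ht, lam_left_inv hsmk t]
    have hαu : Function.invFun (lamf k) (ν u) = s := rfl
    have hnj : ∀ t, min u s < t → t ≤ max u s → |f k t - llim (f k) t| < ε' := by
      intro t ht1 ht2
      by_contra hcon
      push_neg at hcon
      have htI : t ∈ Set.Icc (-(K+2)) (K+2) := by
        rw [Set.mem_Icc]
        rcases le_total u s with h | h
        · rw [min_eq_left h] at ht1; rw [max_eq_right h] at ht2
          constructor <;> linarith
        · rw [min_eq_right h] at ht1; rw [max_eq_left h] at ht2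
          constructor <;> linarith
      have htJ : t ∈ J k := hJ k t htI hcon
      have hαt := hfix t htJ
      rcases le_total u s with h | h
      · rw [min_eq_left h] at ht1; rw [max_eq_right h] at ht2
        have hlt2 : Function.invFun (lamf k) (ν u) < Function.invFun (lamf k) (ν t) := αSM ht1
        rw [hαt, hαu] at hlt2
        exact absurd ht2 (not_le.2 hlt2)
      · rw [min_eq_right h] at ht1; rw [max_eq_left h] at ht2
        rcases lt_or_eq_of_le ht2 with hlt | heq
        · have hlt2 : Function.invFun (lamf k) (ν t) < Function.invFun (lamf k) (ν u) := αSM hlt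
          rw [hαt, hαu] at hlt2
          exact absurd ht1 (not_lt.2 (le_of_lt hlt2))
        · rw [heq] at hαt ht1
          rw [hαu] at hαt
          exact absurd hαt (ne_of_lt ht1)
    have hosck : |f k s - f k u| ≤ 3*ε' := by
      rcases le_total u s with h | h
      · have := hosc k u s huI hsI h (by linarith [hsuabs.2, hrδ k]) (by
          intro t h1 h2
          exact hnj t (by rw [min_eq_left h]; exact h1) (by rw [max_eq_right h]; exact h2))
        linarith [this]
      · have := hosc k s u hsI huI h (by linarith [hsuabs.1, hrδ k]) (by
          intro t h1 h2
          exact hnj t (by rw [min_eq_right h]; exact h1) (by rw [max_eq_left h]; exact h2))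
        rw [abs_sub_comm]
        linarith [this]
    have hE2k : |G k (lamf k s) - f k s| ≤ ε' := hE2 k s hsI
    calc |G k (ν u) - f k u| = |G k (lamf k s) - f k u| := by rw [hlams]
      _ ≤ |G k (lamf k s) - f k s| + |f k s - f k u| := by
          have := abs_sub_le (G k (lamf k s)) (f k s) (f k u)
          linarith
      _ ≤ ε' + 3*ε' := by linarith
      _ = 4 * ε' := by ring
  calc |∑ k, G k (ν u) - ∑ k, f k u| = |∑ k, (G k (ν u) - f k u)| := by
        rw [Finset.sum_sub_distrib]
    _ ≤ ∑ k, |G k (ν u) - f k u| := Finset.abs_sum_le_sum_abs _ _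
    _ ≤ ∑ _k : Fin n, 4 * ε' := Finset.sum_le_sum (fun k _ => hterm k)
    _ = (n:ℝ) * (4 * ε') := by simp [mul_comm]
    _ ≤ ε := by
        rw [hε'def]
        have heq : (n:ℝ) * (4 * (ε / (4*(n:ℝ)+4))) = (4*(n:ℝ)) * ε / (4*(n:ℝ)+4) := by
          ring
        rw [heq, div_le_iff₀ hn4]
        nlinarith [hε, Nat.cast_nonneg (α := ℝ) n]

lemma unif_of_isup {φ : ℕ → ℝ → ℝ} {a b : ℝ}
    (hb : ∀ m, BddAbove (Set.range fun u : Set.Icc a b => φ m (u:ℝ)))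
    (h : Tendsto (fun m => ⨆ u : Set.Icc a b, φ m (u:ℝ)) atTop (𝓝 0))
    {r : ℝ} (hr : 0 < r) :
    ∀ᶠ m in atTop, ∀ u ∈ Set.Icc a b, φ m u ≤ r := by
  filter_upwards [h.eventually (gt_mem_nhds hr)] with m hm u hu
  have : φ m u ≤ ⨆ u : Set.Icc a b, φ m (u:ℝ) := le_ciSup (hb m) ⟨u, hu⟩
  exact le_trans this (le_of_lt hm)

set_option maxHeartbeats 1000000 in
lemma main_fin {n : ℕ} (f : Fin n → ℝ → ℝ) (F : Fin n → ℕ → ℝ → ℝ)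
    (lam : Fin n → ℕ → ℝ → ℝ)
    (hcad : ∀ k, Cadlag (f k)) (hcadF : ∀ k m, Cadlag (F k m))
    (hdisj : ∀ k j, k ≠ j → Disjoint (Disc (f k)) (Disc (f j)))
    (hlam : ∀ k m, StrictMono (lam k m) ∧ Continuous (lam k m) ∧
      Tendsto (lam k m) atTop atTop ∧ Tendsto (lam k m) atBot atBot)
    (hsup : ∀ k, ∀ a b : ℝ, a < b →
      Tendsto (fun m => ⨆ u : Set.Icc a b, |F k m (lam k m u) - f k u|) atTop (𝓝 0) ∧
      Tendsto (fun m => ⨆ u : Set.Icc a b, |lam k m u - u|) atTop (𝓝 0))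
    (K ε : ℝ) (hK : 0 ≤ K) (hε : 0 < ε) :
    ∀ᶠ m in atTop, ∃ ν : ℝ → ℝ, StrictMono ν ∧ Continuous ν ∧ Tendsto ν atTop atTop ∧
      Tendsto ν atBot atBot ∧ (∀ u, |ν u - u| ≤ ε) ∧
      (∀ u ∈ Set.Icc (-K) K, |∑ k, F k m (ν u) - ∑ k, f k u| ≤ ε) := by
  classical
  have hn4 : (0:ℝ) < 4*(n:ℝ)+4 := by positivity
  set ε' := ε / (4*(n:ℝ)+4) with hε'def
  have hε' : 0 < ε' := div_pos hε hn4
  have hfin : ∀ k, {t ∈ Set.Icc (-(K+2)) (K+2) | ε' ≤ |f k t - llim (f k) t|}.Finite :=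
    fun k => finite_jumps (hcad k) _ _ hε'
  set J : Fin n → Finset ℝ := fun k => (hfin k).toFinset with hJdef
  have hJmem : ∀ k t, t ∈ J k ↔
      t ∈ Set.Icc (-(K+2)) (K+2) ∧ ε' ≤ |f k t - llim (f k) t| := by
    intro k t
    rw [hJdef]
    simp [Set.Finite.mem_toFinset, Set.mem_setOf_eq]
  have hJ : ∀ k t, t ∈ Set.Icc (-(K+2)) (K+2) → ε' ≤ |f k t - llim (f k) t| → t ∈ J k :=
    fun k t h1 h2 => (hJmem k t).2 ⟨h1, h2⟩
  have hJ' : ∀ k, ∀ p ∈ J k, p ∈ Set.Icc (-(K+2)) (K+2) :=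
    fun k p hp => ((hJmem k p).1 hp).1
  have hJdisc : ∀ k, ∀ p ∈ J k, p ∈ Disc (f k) := by
    intro k p hp
    have h2 := ((hJmem k p).1 hp).2
    have hne : llim (f k) p ≠ f k p := by
      intro h
      rw [h] at h2
      simp at h2
      linarith
    exact not_continuousAt_of_jump hne
  have hJd : ∀ k j, ∀ p : ℝ, p ∈ J k → p ∈ J j → k = j := by
    intro k j p hk hj
    by_contra hne
    exact Set.disjoint_left.1 (hdisj k j hne) (hJdisc k p hk) (hJdisc j p hj)
  set P := Finset.univ.biUnion J with hPdef
  have hPJ : ∀ k, J k ⊆ P := fun k => Finset.subset_biUnion_of_mem J (Finset.mem_univ k)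
  have hPmem : ∀ p ∈ P, ∃ k, p ∈ J k := by
    intro p hp
    rw [hPdef, Finset.mem_biUnion] at hp
    obtain ⟨k, _, hk⟩ := hp
    exact ⟨k, hk⟩
  obtain ⟨d, hd, hsep⟩ := exists_gap P
  have hosc' : ∀ k : Fin n, ∃ δ > 0, ∀ u v : ℝ,
      u ∈ Set.Icc (-(K+2)) (K+2) → v ∈ Set.Icc (-(K+2)) (K+2) → u ≤ v → v - u ≤ δ →
      (∀ t, u < t → t ≤ v → |f k t - llim (f k) t| < ε') → |f k v - f k u| ≤ 3 * ε' :=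
    fun k => osc_control (hcad k) _ _ (by linarith) hε'
  choose δ hδpos hosc using hosc'
  have hrex : ∃ r, 0 < r ∧ r ≤ d/4 ∧ r ≤ 1 ∧ 2*r ≤ ε ∧ ∀ k, 2*r ≤ δ k := by
    rcases isEmpty_or_nonempty (Fin n) with hn | hn
    · refine ⟨min (d/4) (min 1 (ε/2)), ?_, min_le_left _ _, ?_, ?_, fun k => hn.elim k⟩
      · exact lt_min (by linarith) (lt_min one_pos (by linarith))
      · exact le_trans (min_le_right _ _) (min_le_left _ _)
      · have h := le_trans (min_le_right (d/4) (min 1 (ε/2))) (min_le_right 1 (ε/2))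
        linarith
    · obtain ⟨k₀, -, hk₀⟩ := Finset.exists_min_image Finset.univ δ
        ⟨hn.some, Finset.mem_univ _⟩
      refine ⟨min (min (d/4) 1) (min (ε/2) (δ k₀ / 2)), ?_, ?_, ?_, ?_, ?_⟩
      · exact lt_min (lt_min (by linarith) one_pos)
          (lt_min (by linarith) (by linarith [hδpos k₀]))
      · exact le_trans (min_le_left _ _) (min_le_left _ _)
      · exact le_trans (min_le_left _ _) (min_le_right _ _)
      · have h := le_trans (min_le_right (min (d/4) 1) (min (ε/2) (δ k₀ / 2)))
          (min_le_left (ε/2) (δ k₀ / 2))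
        linarith
      · intro k
        have h1 := le_trans (min_le_right (min (d/4) 1) (min (ε/2) (δ k₀ / 2)))
          (min_le_right (ε/2) (δ k₀ / 2))
        have h2 := hk₀ k (Finset.mem_univ k)
        linarith
  obtain ⟨r, hr0, hrd, hr1, hrε, hrδ⟩ := hrex
  have habK5 : -(K+5) < K+5 := by linarith
  have habK2 : -(K+2) < K+2 := by linarith
  have hE1k : ∀ k, ∀ᶠ m in atTop, ∀ t ∈ Set.Icc (-(K+5)) (K+5), |lam k m t - t| ≤ r := by
    intro k
    refine unif_of_isup (fun m => ?_) (hsup k _ _ habK5).2 hr0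
    obtain ⟨C, hC⟩ := isCompact_Icc.exists_bound_of_continuousOn
      (((hlam k m).2.1.sub continuous_id).continuousOn (s := Set.Icc (-(K+5)) (K+5)))
    refine ⟨C, ?_⟩
    rintro x ⟨u, rfl⟩
    simpa [Real.norm_eq_abs] using hC u u.2
  have hE2k : ∀ k, ∀ᶠ m in atTop,
      ∀ v ∈ Set.Icc (-(K+2)) (K+2), |F k m (lam k m v) - f k v| ≤ ε' := by
    intro k
    refine unif_of_isup (fun m => ?_) (hsup k _ _ habK2).1 hε'
    obtain ⟨C1, hC1⟩ := isCompact_Icc.exists_bound_of_continuousOn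
      ((hlam k m).2.1.continuousOn (s := Set.Icc (-(K+2)) (K+2)))
    obtain ⟨C2, hC2⟩ := cadlag_bdd (hcadF k m) (-C1) C1
    obtain ⟨C3, hC3⟩ := cadlag_bdd (hcad k) (-(K+2)) (K+2)
    refine ⟨C2 + C3, ?_⟩
    rintro x ⟨u, rfl⟩
    have h1 : |lam k m u| ≤ C1 := by
      simpa [Real.norm_eq_abs] using hC1 u u.2
    have h2 : |F k m (lam k m u)| ≤ C2 := hC2 _ (by
      rw [Set.mem_Icc]
      exact abs_le.1 h1)
    have h3 : |f k u| ≤ C3 := hC3 _ u.2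
    calc |F k m (lam k m (u:ℝ)) - f k (u:ℝ)| ≤ |F k m (lam k m (u:ℝ))| + |f k (u:ℝ)| :=
          abs_sub _ _
      _ ≤ C2 + C3 := by linarith
  have hall : ∀ᶠ m in atTop, (∀ k, ∀ t ∈ Set.Icc (-(K+5)) (K+5), |lam k m t - t| ≤ r) ∧
      (∀ k, ∀ v ∈ Set.Icc (-(K+2)) (K+2), |F k m (lam k m v) - f k v| ≤ ε') :=
    (Filter.eventually_all.2 hE1k).and (Filter.eventually_all.2 hE2k)
  filter_upwards [hall] with m hm
  obtain ⟨h1, h2⟩ := hm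
  refine construct f (fun k => F k m) (fun k => lam k m) K ε hK hε J hJ hJ' hJd P hPJ hPmem
    d hd hsep δ hosc r hr0 hrd hr1 hrε hrδ (fun k => hlam k m) (fun k t ht => ?_) h2
  exact h1 k t (by rw [Set.mem_Icc]; exact abs_le.1 ht)


theorem stmt7 (n : ℕ) (f : Fin n → ℝ → ℝ) (F : Fin n → ℕ → ℝ → ℝ)
    (hcad : ∀ k, Cadlag (f k)) (hcadF : ∀ k m, Cadlag (F k m))
    (hdisj : ∀ k j, k ≠ j → Disjoint (Disc (f k)) (Disc (f j)))
    (hconv : ∀ k, J1TendstoSeq (F k) (f k)) :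
    J1TendstoSeq (fun m x => ∑ k, F k m x) (fun x => ∑ k, f k x) := by
  classical
  choose lam hlam using hconv
  have hlamP : ∀ k m, StrictMono (lam k m) ∧ Continuous (lam k m) ∧
      Tendsto (lam k m) atTop atTop ∧ Tendsto (lam k m) atBot atBot := fun k => (hlam k).1
  have hsupP := fun k => (hlam k).2
  have hmain := main_fin f F lam hcad hcadF hdisj hlamP hsupP
  have hGood : ∀ j : ℕ, ∃ M : ℕ, ∀ m ≥ M, ∃ ν : ℝ → ℝ, StrictMono ν ∧ Continuous ν ∧
      Tendsto ν atTop atTop ∧ Tendsto ν atBot atBot ∧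
      (∀ u, |ν u - u| ≤ 1/((j:ℝ)+1)) ∧
      (∀ u ∈ Set.Icc (-(j:ℝ)) (j:ℝ), |∑ k, F k m (ν u) - ∑ k, f k u| ≤ 1/((j:ℝ)+1)) := by
    intro j
    exact eventually_atTop.1 (hmain (j:ℝ) (1/((j:ℝ)+1)) (by positivity) (by positivity))
  choose M hM using hGood
  set N : ℕ → ℕ := fun j => (Finset.range (j+1)).sup M with hNdef
  have hNM : ∀ j, M j ≤ N j := fun j =>
    Finset.le_sup (Finset.mem_range.2 (Nat.lt_succ_self j))
  set S : ℕ → Finset ℕ := fun m => (Finset.range (m+1)).filter (fun j => N j ≤ m) with hSdef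
  have hch : ∀ m : ℕ, ∃ ν : ℝ → ℝ,
      (StrictMono ν ∧ Continuous ν ∧ Tendsto ν atTop atTop ∧ Tendsto ν atBot atBot) ∧
      (∀ h : (S m).Nonempty,
        (∀ u, |ν u - u| ≤ 1/((((S m).max' h : ℕ):ℝ)+1)) ∧
        (∀ u ∈ Set.Icc (-(((S m).max' h : ℕ):ℝ)) (((S m).max' h : ℕ):ℝ),
          |∑ k, F k m (ν u) - ∑ k, f k u| ≤ 1/((((S m).max' h : ℕ):ℝ)+1))) := by
    intro m
    by_cases h : (S m).Nonempty
    · have hle : M ((S m).max' h) ≤ m :=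
        le_trans (hNM _) (Finset.mem_filter.1 ((S m).max'_mem h)).2
      obtain ⟨ν, h1, h2, h3, h4, h5, h6⟩ := hM ((S m).max' h) m hle
      exact ⟨ν, ⟨h1, h2, h3, h4⟩, fun _ => ⟨h5, h6⟩⟩
    · exact ⟨id, ⟨strictMono_id, continuous_id, tendsto_id, tendsto_id⟩,
        fun h' => absurd h' h⟩
  choose nu hnu1 hnu2 using hch
  refine ⟨nu, fun m => ⟨(hnu1 m).1, (hnu1 m).2.1, (hnu1 m).2.2.1, (hnu1 m).2.2.2⟩, ?_⟩
  intro a b hab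
  -- common: for ε > 0 find threshold
  have key : ∀ ε : ℝ, 0 < ε → ∃ N₀ : ℕ, ∀ m ≥ N₀, ∃ h : (S m).Nonempty,
      (1/((((S m).max' h : ℕ):ℝ)+1) < ε) ∧
      Set.Icc a b ⊆ Set.Icc (-(((S m).max' h : ℕ):ℝ)) (((S m).max' h : ℕ):ℝ) := by
    intro ε hε
    obtain ⟨j₀, hj₀⟩ := exists_nat_gt (max (max |a| |b|) (1/ε))
    have hja : |a| < (j₀:ℝ) := lt_of_le_of_lt (le_trans (le_max_left _ _) (le_max_left _ _)) hj₀
    have hjb : |b| < (j₀:ℝ) := lt_of_le_of_lt (le_trans (le_max_right _ _) (le_max_left _ _)) hj₀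
    have hjε : 1/ε < (j₀:ℝ) := lt_of_le_of_lt (le_max_right _ _) hj₀
    have hεj : 1/((j₀:ℝ)+1) < ε := by
      rw [div_lt_iff₀ (by positivity)]
      rw [div_lt_iff₀ hε] at hjε
      nlinarith
    refine ⟨max (N j₀) j₀, fun m hm => ?_⟩
    have hm1 : N j₀ ≤ m := le_trans (le_max_left _ _) hm
    have hm2 : j₀ ≤ m := le_trans (le_max_right _ _) hm
    have hj₀S : j₀ ∈ S m :=
      Finset.mem_filter.2 ⟨Finset.mem_range.2 (Nat.lt_succ_of_le hm2), hm1⟩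
    have h : (S m).Nonempty := ⟨j₀, hj₀S⟩
    refine ⟨h, ?_, ?_⟩
    · have hjm : (j₀:ℝ) ≤ (((S m).max' h : ℕ):ℝ) := by
        exact_mod_cast Finset.le_max' _ j₀ hj₀S
      calc 1/((((S m).max' h : ℕ):ℝ)+1) ≤ 1/((j₀:ℝ)+1) :=
            one_div_le_one_div_of_le (by positivity) (by linarith)
        _ < ε := hεj
    · have hjm : (j₀:ℝ) ≤ (((S m).max' h : ℕ):ℝ) := by
        exact_mod_cast Finset.le_max' _ j₀ hj₀S
      intro u hu
      rw [Set.mem_Icc] at hu ⊢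
      have h1 : -|a| ≤ a := neg_abs_le a
      have h2 : b ≤ |b| := le_abs_self b
      constructor <;> [linarith; linarith]
  constructor
  · rw [Metric.tendsto_atTop]
    intro ε hε
    obtain ⟨N₀, hN₀⟩ := key ε hε
    refine ⟨N₀, fun m hm => ?_⟩
    obtain ⟨h, hlt, hsub⟩ := hN₀ m hm
    obtain ⟨hdev, hsupb⟩ := hnu2 m h
    have hle : (⨆ u : Set.Icc a b, |∑ k, F k m (nu m u) - ∑ k, f k u|)
        ≤ 1/((((S m).max' h : ℕ):ℝ)+1) := by
      refine Real.iSup_le (fun u => hsupb u (hsub u.2)) (by positivity)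
    have hge : (0:ℝ) ≤ ⨆ u : Set.Icc a b, |∑ k, F k m (nu m u) - ∑ k, f k u| :=
      Real.iSup_nonneg (fun u => abs_nonneg _)
    rw [Real.dist_eq, sub_zero, abs_of_nonneg hge]
    exact lt_of_le_of_lt hle hlt
  · rw [Metric.tendsto_atTop]
    intro ε hε
    obtain ⟨N₀, hN₀⟩ := key ε hε
    refine ⟨N₀, fun m hm => ?_⟩
    obtain ⟨h, hlt, hsub⟩ := hN₀ m hm
    obtain ⟨hdev, hsupb⟩ := hnu2 m h
    have hle : (⨆ u : Set.Icc a b, |nu m u - (u:ℝ)|)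
        ≤ 1/((((S m).max' h : ℕ):ℝ)+1) := by
      refine Real.iSup_le (fun u => hdev u) (by positivity)
    have hge : (0:ℝ) ≤ ⨆ u : Set.Icc a b, |nu m u - (u:ℝ)| :=
      Real.iSup_nonneg (fun u => abs_nonneg _)
    rw [Real.dist_eq, sub_zero, abs_of_nonneg hge]
    exact lt_of_le_of_lt hle hlt
end

section
/- Let ξ be a positive random variable with finite mean μ, S_q = ξ₁+⋯+ξ_q with (ξ_i) i.i.d. copies of ξ, and ξ̂ an independent copy of ξ. Fix y, z ≥ 0 and define p̂(u) = P{u − z < S_q ≤ u, u < S_q + ξ̂ ≤ u + y} for u ≥ 0 (equivalently intersected with any event E independent of everything, here taken trivial). Then μ⁻¹ ∫₀^∞ p̂(u) du = μ⁻¹ E[(z ∧ ξ̂ − (ξ̂ − y)₊)₊]. -/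
open MeasureTheory

theorem stmt11
    {Ω : Type*} [MeasurableSpace Ω] (P : Measure Ω) [IsProbabilityMeasure P]
    (q : ℕ) (ξs : ℕ → Ω → ℝ) (ξhat : Ω → ℝ) (μ y z : ℝ)
    (hy : 0 ≤ y) (hz : 0 ≤ z)
    (hmeas : Measurable ξhat) (hmeass : ∀ i, Measurable (ξs i))
    (hpos : ∀ᵐ ω ∂P, 0 < ξhat ω) (hposs : ∀ i, ∀ᵐ ω ∂P, 0 < ξs i ω)
    (hint : Integrable ξhat P) (hints : ∀ i, Integrable (ξs i) P)
    (hident : ∀ i, Measure.map (ξs i) P = Measure.map ξhat P)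
    (hμ : μ = ∫ ω, ξhat ω ∂P) :
    μ⁻¹ * ∫ u in Set.Ici (0:ℝ),
        (P {ω | (u - z < ∑ i ∈ Finset.range q, ξs i ω ∧ ∑ i ∈ Finset.range q, ξs i ω ≤ u)
            ∧ (u < (∑ i ∈ Finset.range q, ξs i ω) + ξhat ω
                ∧ (∑ i ∈ Finset.range q, ξs i ω) + ξhat ω ≤ u + y)}).toReal
      = μ⁻¹ * ∫ ω, max (min z (ξhat ω) - max (ξhat ω - y) 0) 0 ∂P := by
  have hSmeas : Measurable (fun ω => ∑ i ∈ Finset.range q, ξs i ω) :=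
    Finset.measurable_sum _ (fun i _ => hmeass i)
  set S : Ω → ℝ := fun ω => ∑ i ∈ Finset.range q, ξs i ω with hSdef
  set X : Ω → ℝ := ξhat with hXdef
  set f : Ω → ℝ := fun ω => max (min z (X ω) - max (X ω - y) 0) 0 with hfdef
  have hSnn : ∀ᵐ ω ∂P, 0 ≤ S ω := by
    have h : ∀ᵐ ω ∂P, ∀ i ∈ Finset.range q, 0 < ξs i ω :=
      (Filter.eventually_all_finset _).2 (fun i _ => hposs i)
    filter_upwards [h] with ω hω
    exact Finset.sum_nonneg (fun i hi => (hω i hi).le)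
  set B : Set (ℝ × Ω) :=
    {p | (p.1 - z < S p.2 ∧ S p.2 ≤ p.1) ∧
         (p.1 < S p.2 + X p.2 ∧ S p.2 + X p.2 ≤ p.1 + y)} with hBdef
  have hBmeas : MeasurableSet B := by
    apply MeasurableSet.inter
    · exact MeasurableSet.inter
        (measurableSet_lt (measurable_fst.sub measurable_const) (hSmeas.comp measurable_snd))
        (measurableSet_le (hSmeas.comp measurable_snd) measurable_fst)
    · exact MeasurableSet.inter
        (measurableSet_lt measurable_fst
          ((hSmeas.comp measurable_snd).add (hmeas.comp measurable_snd)))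
        (measurableSet_le ((hSmeas.comp measurable_snd).add (hmeas.comp measurable_snd))
          (measurable_fst.add measurable_const))
  have hsec : ∀ u : ℝ,
      {ω | (u - z < S ω ∧ S ω ≤ u) ∧ (u < S ω + X ω ∧ S ω + X ω ≤ u + y)}
        = Prod.mk u ⁻¹' B := fun u => rfl
  -- Step 1 : turn the real integral into a lintegral
  have hmeas_fiber : Measurable fun u : ℝ => P (Prod.mk u ⁻¹' B) :=
    measurable_measure_prodMk_left hBmeas
  have step1 :
      (∫ u in Set.Ici (0:ℝ), (P (Prod.mk u ⁻¹' B)).toReal)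
        = (∫⁻ u in Set.Ici (0:ℝ), P (Prod.mk u ⁻¹' B)).toReal := by
    apply integral_toReal
    · exact hmeas_fiber.aemeasurable
    · exact Filter.Eventually.of_forall (fun u => measure_lt_top _ _)
  -- Step 2 : Tonelli / product measure
  have step2 :
      (∫⁻ u in Set.Ici (0:ℝ), P (Prod.mk u ⁻¹' B))
        = ((volume.restrict (Set.Ici (0:ℝ))).prod P) B :=
    (Measure.prod_apply hBmeas).symm
  have step3 :
      ((volume.restrict (Set.Ici (0:ℝ))).prod P) B
        = ∫⁻ ω, (volume.restrict (Set.Ici (0:ℝ))) ((fun u => (u, ω)) ⁻¹' B) ∂P :=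
    Measure.prod_apply_symm hBmeas
  -- Step 4 : compute each ω-section
  have step4 :
      (∫⁻ ω, (volume.restrict (Set.Ici (0:ℝ))) ((fun u => (u, ω)) ⁻¹' B) ∂P)
        = ∫⁻ ω, ENNReal.ofReal (f ω) ∂P := by
    apply lintegral_congr_ae
    filter_upwards [hSnn] with ω hω
    have hset : ((fun u => (u, ω)) ⁻¹' B)
        = Set.Ico (max (S ω) (S ω + X ω - y)) (min (S ω + z) (S ω + X ω)) := by
      ext u
      simp only [hBdef, Set.mem_preimage, Set.mem_setOf_eq, Set.mem_Ico, max_le_iff,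
        lt_min_iff]
      constructor
      · rintro ⟨⟨h1, h2⟩, ⟨h3, h4⟩⟩
        exact ⟨⟨h2, by linarith⟩, ⟨by linarith, h3⟩⟩
      · rintro ⟨⟨h1, h2⟩, ⟨h3, h4⟩⟩
        exact ⟨⟨by linarith, h1⟩, ⟨h4, by linarith⟩⟩
    rw [hset, Measure.restrict_apply measurableSet_Ico]
    have hsub : Set.Ico (max (S ω) (S ω + X ω - y)) (min (S ω + z) (S ω + X ω))
        ∩ Set.Ici (0:ℝ)
        = Set.Ico (max (S ω) (S ω + X ω - y)) (min (S ω + z) (S ω + X ω)) := by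
      apply Set.inter_eq_left.2
      intro u hu
      exact le_trans (le_trans hω (le_max_left _ _)) hu.1
    have key : min (S ω + z) (S ω + X ω) - max (S ω) (S ω + X ω - y)
        = min z (X ω) - max (X ω - y) 0 := by
      rcases le_total z (X ω) with h | h <;> rcases le_total (X ω - y) 0 with h' | h'
      · rw [min_eq_left (by linarith), min_eq_left h, max_eq_left (by linarith),
          max_eq_right h']; ring
      · rw [min_eq_left (by linarith), min_eq_left h, max_eq_right (by linarith),
          max_eq_left h']; ring
      · rw [min_eq_right (by linarith), min_eq_right h, max_eq_left (by linarith),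
          max_eq_right h']; ring
      · rw [min_eq_right (by linarith), min_eq_right h, max_eq_right (by linarith),
          max_eq_left h']; ring
    rw [hsub, Real.volume_Ico, key]
    simp only [hfdef]
    rcases le_total (min z (X ω) - max (X ω - y) 0) 0 with h | h
    · rw [max_eq_right h, ENNReal.ofReal_eq_zero.2 h, ENNReal.ofReal_zero]
    · rw [max_eq_left h]
  -- Step 5 : back from lintegral to Bochner integral
  have hfmeas : AEStronglyMeasurable f P := by
    apply Measurable.aestronglyMeasurable
    exact ((measurable_const.min hmeas).sub
      ((hmeas.sub measurable_const).max measurable_const)).max measurable_const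
  have step5 : (∫⁻ ω, ENNReal.ofReal (f ω) ∂P).toReal = ∫ ω, f ω ∂P :=
    (integral_eq_lintegral_of_nonneg_ae
      (Filter.Eventually.of_forall (fun ω => le_max_right _ _)) hfmeas).symm
  congr 1
  calc ∫ u in Set.Ici (0:ℝ), (P (Prod.mk u ⁻¹' B)).toReal
      = (∫⁻ u in Set.Ici (0:ℝ), P (Prod.mk u ⁻¹' B)).toReal := step1
    _ = (((volume.restrict (Set.Ici (0:ℝ))).prod P) B).toReal := by rw [step2]
    _ = (∫⁻ ω, (volume.restrict (Set.Ici (0:ℝ))) ((fun u => (u, ω)) ⁻¹' B) ∂P).toReal := by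
        rw [step3]
    _ = (∫⁻ ω, ENNReal.ofReal (f ω) ∂P).toReal := by rw [step4]
    _ = ∫ ω, f ω ∂P := step5
end
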